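/- arXiv:2306.00958 — 2 statements merged into one kernel-verified Lean document; each statement's English description precedes it below -/
import Mathlib

section
/- Let G and L be measurable spaces, let γ ∈ (0,1), and let S : G × L → ℝ be a bounded measurable similarity function. Let μ be a probability measure on G × L (the joint distribution p(g,l) of goal-frame/text pairs), let μ_L denote its marginal on L, and let ν be a probability measure on G (the marginal distribution D(g') of goal frames). If the video distribution consists solely of degenerate videos of repeated goal frames aligned with their text annotation (so that in the VIP-L objective the initial-frame distribution and the successive-frame distribution both reduce to the goal-frame distribution), then the VIP-L objective equals the InfoNCE objective plus 1, i.e. ∫_{G×L} −(1−γ)·S(g,l) dμ(g,l) + ∫_L log( ∫_G exp( S(g',l) + 1 − γ·S(g',l) ) dν(g') ) dμ_L(l) = ∫_{G×L} −log( exp((1−γ)·S(g,l)) / ∫_G exp((1−γ)·S(g',l)) dν(g') ) dμ(g,l) + 1. -/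
open MeasureTheory Real

/-- Proposition 1 (VIP-L on degenerate videos equals InfoNCE plus 1):
when the video distribution consists solely of degenerate videos of repeated goal
frames aligned with their text annotation, so that in the VIP-L objective the
initial-frame distribution and the successive-frame distribution both reduce to the
goal-frame distribution, the VIP-L objective equals the InfoNCE objective plus 1. -/
theorem vipL_degenerate_eq_infoNCE_add_one {G L : Type*} [MeasurableSpace G] [MeasurableSpace L]
    (γ : ℝ) (hγ : γ ∈ Set.Ioo (0 : ℝ) 1)
    (S : G × L → ℝ) (hS : Measurable S) (hbdd : ∃ C, ∀ p, |S p| ≤ C)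
    (μ : Measure (G × L)) [IsProbabilityMeasure μ]
    (ν : Measure G) [IsProbabilityMeasure ν] :
    (∫ p, -((1 - γ) * S p) ∂μ) +
      (∫ l, Real.log (∫ g', Real.exp (S (g', l) + 1 - γ * S (g', l)) ∂ν) ∂(μ.map Prod.snd)) =
    (∫ p, -Real.log (Real.exp ((1 - γ) * S p) /
        ∫ g', Real.exp ((1 - γ) * S (g', p.2)) ∂ν) ∂μ) + 1 := by
  obtain ⟨C₀, hC₀⟩ := hbdd
  set C : ℝ := |C₀| with hC
  have hC' : ∀ p, |S p| ≤ C := fun p => (hC₀ p).trans (le_abs_self _)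
  have hCn : 0 ≤ C := abs_nonneg _
  have hγ1 : (0:ℝ) < 1 - γ := by linarith [hγ.2]
  -- the partition function
  set F : L → ℝ := fun l => ∫ g', Real.exp ((1 - γ) * S (g', l)) ∂ν with hF
  have hSM : StronglyMeasurable S := hS.stronglyMeasurable
  have hFmeas : StronglyMeasurable F := by
    have : StronglyMeasurable (fun q : L × G => Real.exp ((1 - γ) * S (q.2, q.1))) := by
      apply Measurable.stronglyMeasurable
      exact (measurable_const.mul (hS.comp (measurable_snd.prodMk measurable_fst))).exp
    exact this.integral_prod_right'
  -- integrability of exp((1-γ)S(·,l)) over ν, for each l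
  have hint : ∀ l : L, Integrable (fun g' => Real.exp ((1 - γ) * S (g', l))) ν := by
    intro l
    refine Integrable.mono' (integrable_const (Real.exp ((1 - γ) * C)))
      ((measurable_const.mul (hS.comp (measurable_id.prodMk measurable_const))).exp).aestronglyMeasurable
      (ae_of_all _ fun g' => ?_)
    rw [Real.norm_eq_abs, abs_of_pos (Real.exp_pos _)]
    exact Real.exp_le_exp.2 (by
      have := (abs_le.1 (hC' (g', l))).2
      nlinarith)
  have hFpos : ∀ l, 0 < F l := fun l => integral_exp_pos (hint l)
  -- bounds on log F
  have hFle : ∀ l, F l ≤ Real.exp ((1 - γ) * C) := by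
    intro l
    calc F l ≤ ∫ _, Real.exp ((1 - γ) * C) ∂ν := by
          refine integral_mono (hint l) (integrable_const _) fun g' => Real.exp_le_exp.2 ?_
          have := (abs_le.1 (hC' (g', l))).2
          nlinarith
      _ = Real.exp ((1 - γ) * C) := by simp
  have hFge : ∀ l, Real.exp (-((1 - γ) * C)) ≤ F l := by
    intro l
    calc Real.exp (-((1 - γ) * C)) = ∫ _, Real.exp (-((1 - γ) * C)) ∂ν := by simp
      _ ≤ F l := by
          refine integral_mono (integrable_const _) (hint l) fun g' => Real.exp_le_exp.2 ?_
          have := (abs_le.1 (hC' (g', l))).1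
          nlinarith
  have hlogF_bdd : ∀ l, |Real.log (F l)| ≤ (1 - γ) * C := by
    intro l
    rw [abs_le]
    constructor
    · calc -((1 - γ) * C) = Real.log (Real.exp (-((1 - γ) * C))) := (Real.log_exp _).symm
        _ ≤ Real.log (F l) := Real.log_le_log (Real.exp_pos _) (hFge l)
    · calc Real.log (F l) ≤ Real.log (Real.exp ((1 - γ) * C)) :=
            Real.log_le_log (hFpos l) (hFle l)
        _ = (1 - γ) * C := Real.log_exp _
  haveI : IsProbabilityMeasure (μ.map Prod.snd) :=
    Measure.isProbabilityMeasure_map measurable_snd.aemeasurable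
  -- integrabilities over μ
  have hint1 : Integrable (fun p => -((1 - γ) * S p)) μ := by
    refine Integrable.mono' (integrable_const ((1 - γ) * C))
      ((measurable_const.mul hS).neg).aestronglyMeasurable (ae_of_all _ fun p => ?_)
    rw [Real.norm_eq_abs, abs_neg, abs_mul, abs_of_pos hγ1]
    exact mul_le_mul_of_nonneg_left (hC' p) hγ1.le
  have hint2 : Integrable (fun p : G × L => Real.log (F p.2)) μ := by
    refine Integrable.mono' (integrable_const ((1 - γ) * C))
      ((hFmeas.measurable.comp measurable_snd).log).aestronglyMeasurable
      (ae_of_all _ fun p => ?_)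
    exact hlogF_bdd p.2
  -- compute the second LHS term
  have key1 : ∀ l : L, Real.log (∫ g', Real.exp (S (g', l) + 1 - γ * S (g', l)) ∂ν)
      = Real.log (F l) + 1 := by
    intro l
    have hEq : (fun g' => Real.exp (S (g', l) + 1 - γ * S (g', l)))
        = fun g' => Real.exp ((1 - γ) * S (g', l)) * Real.exp 1 := by
      funext g'
      rw [← Real.exp_add]
      ring_nf
    rw [hEq, integral_mul_const, Real.log_mul (hFpos l).ne' (Real.exp_pos 1).ne',
      Real.log_exp]
  -- compute the RHS integrand
  have key2 : ∀ p : G × L, -Real.log (Real.exp ((1 - γ) * S p) / F p.2)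
      = -((1 - γ) * S p) + Real.log (F p.2) := by
    intro p
    rw [Real.log_div (Real.exp_pos _).ne' (hFpos p.2).ne', Real.log_exp]
    ring
  have hmapInt : ∫ p, Real.log (F p.2) ∂μ = ∫ l, Real.log (F l) ∂(μ.map Prod.snd) := by
    rw [integral_map measurable_snd.aemeasurable
      (hFmeas.measurable.log).aestronglyMeasurable]
  calc (∫ p, -((1 - γ) * S p) ∂μ) +
      (∫ l, Real.log (∫ g', Real.exp (S (g', l) + 1 - γ * S (g', l)) ∂ν) ∂(μ.map Prod.snd))
      = (∫ p, -((1 - γ) * S p) ∂μ) +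
        (∫ l, (Real.log (F l) + 1) ∂(μ.map Prod.snd)) := by
          congr 1; exact integral_congr_ae (ae_of_all _ key1)
    _ = (∫ p, -((1 - γ) * S p) ∂μ) + ((∫ l, Real.log (F l) ∂(μ.map Prod.snd)) + 1) := by
          congr 1
          rw [integral_add _ (integrable_const 1)]
          · simp
          · refine Integrable.mono' (integrable_const ((1 - γ) * C))
              (hFmeas.measurable.log).aestronglyMeasurable (ae_of_all _ fun l => hlogF_bdd l)
    _ = ((∫ p, -((1 - γ) * S p) ∂μ) + (∫ p, Real.log (F p.2) ∂μ)) + 1 := by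
          rw [hmapInt]; ring
    _ = (∫ p, (-((1 - γ) * S p) + Real.log (F p.2)) ∂μ) + 1 := by
          rw [integral_add hint1 hint2]
    _ = (∫ p, -Real.log (Real.exp ((1 - γ) * S p) /
          ∫ g', Real.exp ((1 - γ) * S (g', p.2)) ∂ν) ∂μ) + 1 := by
          congr 1
          exact (integral_congr_ae (ae_of_all _ key2)).symm
end

section
/- Let B be a positive natural number, γ ∈ (0,1), and let g_1,…,g_B ∈ G and l_1,…,l_B ∈ L be a batch of goal-frame/text pairs with S : G × L → ℝ any function. Then the empirical VIP-L loss on the degenerate videos ((g_i,g_i); l_i) equals the empirical InfoNCE loss plus 1: (1/B)·Σ_{i=1}^{B} ( −(1−γ)·S(g_i,l_i) ) + (1/B)·Σ_{i=1}^{B} log( (1/B)·Σ_{j=1}^{B} exp( S(g_j,l_i) + 1 − γ·S(g_j,l_i) ) ) = (1/B)·Σ_{i=1}^{B} ( −log( exp((1−γ)·S(g_i,l_i)) / ( (1/B)·Σ_{j=1}^{B} exp((1−γ)·S(g_j,l_i)) ) ) ) + 1. -/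
open Real Finset

/-- Finite-sample (minibatch) instance of Proposition 1: on a batch of `B`
goal-frame/text pairs, the empirical VIP-L loss on the degenerate videos
`((gᵢ, gᵢ); lᵢ)` equals the empirical InfoNCE loss plus 1. -/
theorem empirical_vipL_eq_empirical_infoNCE_add_one {G L : Type*}
    (B : ℕ) (hB : 0 < B) (γ : ℝ) (hγ : γ ∈ Set.Ioo (0 : ℝ) 1)
    (g : Fin B → G) (l : Fin B → L) (S : G × L → ℝ) :
    (1 / (B : ℝ)) * ∑ i, -((1 - γ) * S (g i, l i)) +
      (1 / (B : ℝ)) * ∑ i, Real.log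
        ((1 / (B : ℝ)) * ∑ j, Real.exp (S (g j, l i) + 1 - γ * S (g j, l i))) =
    (1 / (B : ℝ)) * ∑ i, -Real.log
        (Real.exp ((1 - γ) * S (g i, l i)) /
          ((1 / (B : ℝ)) * ∑ j, Real.exp ((1 - γ) * S (g j, l i)))) + 1 := by
  have hBpos : (0 : ℝ) < B := by exact_mod_cast hB
  set A : Fin B → ℝ := fun i => (1 / (B : ℝ)) * ∑ j, Real.exp ((1 - γ) * S (g j, l i))
    with hA
  have hApos : ∀ i, 0 < A i := by
    intro i
    apply mul_pos (by positivity)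
    exact Finset.sum_pos (fun j _ => Real.exp_pos _) ⟨⟨0, hB⟩, Finset.mem_univ _⟩
  have h1 : ∀ i, Real.log ((1 / (B : ℝ)) * ∑ j,
      Real.exp (S (g j, l i) + 1 - γ * S (g j, l i))) = 1 + Real.log (A i) := by
    intro i
    have : ∀ j : Fin B, Real.exp (S (g j, l i) + 1 - γ * S (g j, l i))
        = Real.exp 1 * Real.exp ((1 - γ) * S (g j, l i)) := by
      intro j
      rw [← Real.exp_add]; ring_nf
    rw [funext this]
    rw [← Finset.mul_sum, show (1 / (B : ℝ)) * (Real.exp 1 * ∑ j, Real.exp ((1 - γ) * S (g j, l i)))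
      = Real.exp 1 * A i by rw [hA]; ring]
    rw [Real.log_mul (Real.exp_ne_zero 1) (hApos i).ne', Real.log_exp]
  have h2 : ∀ i, -Real.log (Real.exp ((1 - γ) * S (g i, l i)) / A i)
      = -((1 - γ) * S (g i, l i)) + Real.log (A i) := by
    intro i
    rw [Real.log_div (Real.exp_ne_zero _) (hApos i).ne', Real.log_exp]
    ring
  have h2' : ∀ i, -Real.log (Real.exp ((1 - γ) * S (g i, l i)) /
      ((1 / (B : ℝ)) * ∑ j, Real.exp ((1 - γ) * S (g j, l i))))
      = -((1 - γ) * S (g i, l i)) + Real.log (A i) := fun i => h2 i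
  simp only [h1, h2', Finset.sum_add_distrib, Finset.sum_const, Finset.card_univ,
    Fintype.card_fin, nsmul_eq_mul, mul_one]
  field_simp
  ring
end
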